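/- Every morphism u of Ω_n^epi of degree d ≥ 1 admits a factorization as a composite of d morphisms of degree 1; moreover every factorization of u into degree-1 morphisms has exactly deg(u) factors. -/

import Mathlib

open CategoryTheory

/-- An object of the category `Ω_n^epi` of pruned `n`-level trees: a sequence of
monotone surjections `T_0 → T_1 → ⋯ → T_n` between the finite ordered sets
`T_i = Fin (t i)`, with `T_n` (and all higher levels) a one-point set. -/
structure PTree (n : ℕ) where
  t : ℕ → ℕ
  map : ∀ i : ℕ, Fin (t i) → Fin (t (i+1))
  mono : ∀ i, Monotone (map i)
  surjmap : ∀ i, Function.Surjective (map i)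
  top : ∀ i, n ≤ i → t i = 1

/-- A morphism of pruned trees: a family of surjections commuting with the
structure maps, order-preserving on every fiber of the structure maps. -/
structure PTreeHom {n : ℕ} (τ σ : PTree n) where
  app : ∀ i, Fin (τ.t i) → Fin (σ.t i)
  surj : ∀ i, Function.Surjective (app i)
  comm : ∀ i x, app (i+1) (τ.map i x) = σ.map i (app i x)
  fiberMono : ∀ i x y, τ.map i x = τ.map i y → x ≤ y → app i x ≤ app i y

theorem PTreeHom.ext' {n : ℕ} {τ σ : PTree n} {f g : PTreeHom τ σ}
    (h : f.app = g.app) : f = g := by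
  cases f; cases g; cases h; rfl

instance (n : ℕ) : Category (PTree n) where
  Hom := PTreeHom
  id τ := ⟨fun _ => _root_.id, fun _ => Function.surjective_id, fun _ _ => rfl,
    fun _ _ _ _ h => h⟩
  comp f g :=
    ⟨fun i => g.app i ∘ f.app i,
     fun i => (g.surj i).comp (f.surj i),
     fun i x => by simp only [Function.comp_apply, f.comm, g.comm],
     fun i x y hxy hle =>
       g.fiberMono i _ _ (by rw [← f.comm, ← f.comm, hxy]) (f.fiberMono i x y hxy hle)⟩
  id_comp _ := PTreeHom.ext' rfl
  comp_id _ := PTreeHom.ext' rfl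
  assoc _ _ _ := PTreeHom.ext' rfl

/-- The degree of a pruned tree: the number of vertices of levels `0,…,n-1`. -/
def PTree.deg {n : ℕ} (τ : PTree n) : ℕ := ∑ i ∈ Finset.range n, τ.t i

/-- The degree of a morphism `u : τ ⟶ σ`: `deg τ - deg σ`. -/
def homDeg {n : ℕ} {τ σ : PTree n} (_ : τ ⟶ σ) : ℤ :=
  (τ.deg : ℤ) - (σ.deg : ℤ)

/-- A morphism (with possibly different source and target) is an identity. -/
def IsIdentityHom {n : ℕ} {τ σ : PTree n} (u : τ ⟶ σ) : Prop :=
  ∃ h : τ = σ, u = eqToHom h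

/-- Composable chains of morphisms `τ = τ_d → τ_{d-1} → ⋯ → τ_0 = σ` in
`Ω_n^epi` (the `cons` operation adds a morphism at the `σ` side, i.e. the
head of a chain is the morphism `u_1` closest to the target `σ`). -/
inductive Chain {n : ℕ} : PTree n → PTree n → Type
  | nil {τ : PTree n} : Chain τ τ
  | cons {τ θ σ : PTree n} (v : θ ⟶ σ) (c : Chain τ θ) : Chain τ σ

namespace Chain

/-- The composite of a chain. -/
def comp {n : ℕ} : ∀ {τ σ : PTree n}, Chain τ σ → (τ ⟶ σ)
  | _, _, nil => 𝟙 _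
  | _, _, cons v c => c.comp ≫ v

/-- The number of morphisms in a chain. -/
def length {n : ℕ} : ∀ {τ σ : PTree n}, Chain τ σ → ℕ
  | _, _, nil => 0
  | _, _, cons _ c => c.length + 1

/-- All morphisms in the chain are non-identities. -/
def NonId {n : ℕ} : ∀ {τ σ : PTree n}, Chain τ σ → Prop
  | _, _, nil => True
  | _, _, cons v c => ¬ IsIdentityHom v ∧ c.NonId

/-- All morphisms in the chain have degree 1. -/
def AllOne {n : ℕ} : ∀ {τ σ : PTree n}, Chain τ σ → Prop
  | _, _, nil => True
  | _, _, cons v c => homDeg v = 1 ∧ c.AllOne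

end Chain

---------------------------------------------------------------------------
-- auxiliary development
---------------------------------------------------------------------------

namespace Stmt3

open Function

section LexHelp
variable {α β : Type*} [LinearOrder α] [LinearOrder β]

lemma lex_fst_le {p q : α × β} (h : toLex p ≤ toLex q) : p.1 ≤ q.1 := by
  rcases Prod.Lex.le_iff.mp h with h | ⟨h, -⟩
  exacts [h.le, h.le]

lemma lex_snd_le {p q : α × β} (h : toLex p ≤ toLex q) (he : p.1 = q.1) : p.2 ≤ q.2 := by
  rcases Prod.Lex.le_iff.mp h with h | ⟨-, h⟩
  · exact absurd he h.ne
  · exact h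

lemma lex_le_of {p q : α × β} (h1 : p.1 ≤ q.1) (h2 : p.1 = q.1 → p.2 ≤ q.2) :
    toLex p ≤ toLex q := by
  rcases h1.lt_or_eq with h | h
  · exact Prod.Lex.le_iff.mpr (Or.inl h)
  · exact Prod.Lex.le_iff.mpr (Or.inr ⟨h, h2 h⟩)

end LexHelp

variable {n : ℕ}

section Merge

variable (τ : PTree n) (i x : ℕ)

def tθ (j : ℕ) : ℕ := if j = i then τ.t i - 1 else τ.t j

lemma tθ_ne {j : ℕ} (h : j ≠ i) : tθ τ i j = τ.t j := if_neg h

lemma tθ_i : tθ τ i i = τ.t i - 1 := if_pos rfl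

lemma tθ_bound {j : ℕ} (z : Fin (tθ τ i j)) :
    (j = i → (z : ℕ) < τ.t i - 1) ∧ (j ≠ i → (z : ℕ) < τ.t j) := by
  have hz : (z : ℕ) < if j = i then τ.t i - 1 else τ.t j := z.isLt
  by_cases h : j = i
  · rw [if_pos h] at hz
    exact ⟨fun _ => hz, fun hn => absurd h hn⟩
  · rw [if_neg h] at hz
    exact ⟨fun he => absurd he h, fun _ => hz⟩

def lmap (j : ℕ) (z : Fin (tθ τ i j)) : Fin (τ.t j) :=
  ⟨if j = i ∧ x < z.val then z.val + 1 else z.val, by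
    rcases tθ_bound τ i z with ⟨h1, h2⟩
    by_cases h : j = i
    · have hb := h1 h
      subst h
      split <;> omega
    · have hb := h2 h
      rw [if_neg (by tauto)]
      exact hb⟩

variable (hx1 : x + 1 < τ.t i)

def cmap (j : ℕ) (z : Fin (τ.t j)) : Fin (tθ τ i j) :=
  ⟨if j = i ∧ x < z.val then z.val - 1 else z.val, by
    have hz := z.isLt
    unfold tθ
    by_cases h : j = i
    · subst h
      rw [if_pos rfl]
      split <;> omega
    · rw [if_neg h, if_neg (by tauto)]
      exact hz⟩

lemma cmap_val (j : ℕ) (z : Fin (τ.t j)) :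
    (cmap τ i x hx1 j z).val = if j = i ∧ x < z.val then z.val - 1 else z.val := rfl

lemma lmap_val (j : ℕ) (z : Fin (tθ τ i j)) :
    (lmap τ i x j z).val = if j = i ∧ x < z.val then z.val + 1 else z.val := rfl

lemma cmap_lmap (j : ℕ) (z : Fin (tθ τ i j)) :
    cmap τ i x hx1 j (lmap τ i x j z) = z := by
  apply Fin.ext
  rw [cmap_val, lmap_val]
  split_ifs <;> omega

lemma cmap_mono (j : ℕ) : Monotone (cmap τ i x hx1 j) := by
  intro a b hab
  rw [Fin.le_def] at hab ⊢
  rw [cmap_val, cmap_val]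
  split_ifs <;> omega

lemma lmap_mono (j : ℕ) : Monotone (lmap τ i x j) := by
  intro a b hab
  rw [Fin.le_def] at hab ⊢
  rw [lmap_val, lmap_val]
  split_ifs <;> omega

lemma cmap_inj {j : ℕ} (h : j ≠ i) {a b : Fin (τ.t j)}
    (e : cmap τ i x hx1 j a = cmap τ i x hx1 j b) : a = b := by
  have := congrArg Fin.val e
  rw [cmap_val, cmap_val] at this
  apply Fin.ext
  rw [if_neg (by tauto), if_neg (by tauto)] at this
  exact this

lemma lmap_cmap (j : ℕ) (z : Fin (τ.t j)) :
    (lmap τ i x j (cmap τ i x hx1 j z)).val = z.val ∨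
      (j = i ∧ z.val = x + 1 ∧ (lmap τ i x j (cmap τ i x hx1 j z)).val = x) := by
  rw [lmap_val, cmap_val]
  split_ifs <;> omega

/-- key cancellation: any level-indexed family identifying `x` and `x+1` at
level `i` is unchanged by `lmap ∘ cmap`. -/
lemma apply_lc {γ : ℕ → Type*} (f : ∀ j, Fin (τ.t j) → γ j)
    (hf : f i ⟨x, Nat.lt_of_succ_lt hx1⟩ = f i ⟨x + 1, hx1⟩) (j : ℕ) (z : Fin (τ.t j)) :
    f j (lmap τ i x j (cmap τ i x hx1 j z)) = f j z := by
  rcases lmap_cmap τ i x hx1 j z with h | ⟨hj, hz, hv⟩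
  · exact congrArg (f j) (Fin.ext h)
  · subst hj
    have hz' : z = ⟨x + 1, hx1⟩ := Fin.ext hz
    have hv' : lmap τ j x j (cmap τ j x hx1 j z) = ⟨x, Nat.lt_of_succ_lt hx1⟩ :=
      Fin.ext hv
    rw [hv', hz', hf]

variable {σ : PTree n} (u : PTreeHom τ σ)

/-- The levelwise map from `τ` to the collapsed tree: above level `i` (and at
level `i`) it is the (cast / collapse) map `cmap`; below level `i` it is a
"block sorting" permutation defined by descending recursion. -/
def W (j : ℕ) : Fin (τ.t j) → Fin (tθ τ i j) :=
  if h : j < i then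
    fun z =>
      ⟨((Tuple.sort (fun w' : Fin (τ.t j) =>
          toLex (W (j + 1) (τ.map j w'), toLex (u.app j w', w'))))⁻¹ z).val, by
        rw [tθ_ne τ i (Nat.ne_of_lt h)]
        exact Fin.isLt _⟩
  else cmap τ i x hx1 j
termination_by i - j
decreasing_by omega

/-- The sorting key used at levels `j < i`. -/
def K (j : ℕ) (z : Fin (τ.t j)) :
    Fin (tθ τ i (j + 1)) ×ₗ (Fin (σ.t j) ×ₗ Fin (τ.t j)) :=
  toLex (W τ i x hx1 u (j + 1) (τ.map j z), toLex (u.app j z, z))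

/-- The sorting permutation at levels `j < i`. -/
def S (j : ℕ) : Equiv.Perm (Fin (τ.t j)) :=
  Tuple.sort (K τ i x hx1 u j)

lemma W_lt {j : ℕ} (h : j < i) (z : Fin (τ.t j)) :
    (W τ i x hx1 u j z).val = ((S τ i x hx1 u j)⁻¹ z).val := by
  rw [W, dif_pos h]
  rfl

lemma W_ge {j : ℕ} (h : ¬ j < i) : W τ i x hx1 u j = cmap τ i x hx1 j := by
  rw [W, dif_neg h]

/-- The section of `W`. -/
def L (j : ℕ) : Fin (tθ τ i j) → Fin (τ.t j) :=
  if h : j < i then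
    fun z => S τ i x hx1 u j ⟨z.val, by
      have := (tθ_bound τ i z).2 (Nat.ne_of_lt h)
      exact this⟩
  else lmap τ i x j

lemma L_lt {j : ℕ} (h : j < i) (z : Fin (tθ τ i j)) (pf : z.val < τ.t j) :
    L τ i x hx1 u j z = S τ i x hx1 u j ⟨z.val, pf⟩ := by
  rw [L, dif_pos h]

lemma L_ge {j : ℕ} (h : ¬ j < i) : L τ i x hx1 u j = lmap τ i x j := by
  rw [L, dif_neg h]

lemma K_inj (j : ℕ) : Function.Injective (K τ i x hx1 u j) := fun a b e =>
  congrArg (fun p => (ofLex ((ofLex p).2)).2) e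

lemma KS_smono (j : ℕ) : StrictMono (K τ i x hx1 u j ∘ S τ i x hx1 u j) :=
  (Tuple.monotone_sort _).strictMono_of_injective
    ((K_inj τ i x hx1 u j).comp (S τ i x hx1 u j).injective)

lemma Sinv_le_iff {j : ℕ} {a b : Fin (τ.t j)} :
    (S τ i x hx1 u j)⁻¹ a ≤ (S τ i x hx1 u j)⁻¹ b ↔
      K τ i x hx1 u j a ≤ K τ i x hx1 u j b := by
  rw [← (KS_smono τ i x hx1 u j).le_iff_le]
  simp only [Function.comp_apply, Equiv.Perm.inv_def, Equiv.apply_symm_apply]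

lemma W_L (j : ℕ) (z : Fin (tθ τ i j)) :
    W τ i x hx1 u j (L τ i x hx1 u j z) = z := by
  by_cases h : j < i
  · have pf : z.val < τ.t j := (tθ_bound τ i z).2 (Nat.ne_of_lt h)
    apply Fin.ext
    rw [L_lt τ i x hx1 u h z pf, W_lt τ i x hx1 u h]
    rw [Equiv.Perm.inv_def, Equiv.symm_apply_apply]
  · rw [W_ge τ i x hx1 u h, L_ge τ i x hx1 u h]
    exact cmap_lmap τ i x hx1 j z

lemma L_W {j : ℕ} (h : j < i) (z : Fin (τ.t j)) :
    L τ i x hx1 u j (W τ i x hx1 u j z) = z := by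
  have h1 : (W τ i x hx1 u j z).val = ((S τ i x hx1 u j)⁻¹ z).val := W_lt τ i x hx1 u h z
  have pf : (W τ i x hx1 u j z).val < τ.t j := by rw [h1]; exact Fin.isLt _
  rw [L_lt τ i x hx1 u h _ pf]
  have h2 : (⟨(W τ i x hx1 u j z).val, pf⟩ : Fin (τ.t j)) = (S τ i x hx1 u j)⁻¹ z :=
    Fin.ext h1
  rw [h2, Equiv.Perm.inv_def, Equiv.apply_symm_apply]

/-- `apply_lc` upgraded to `L ∘ W`. -/
lemma apply_LW {γ : ℕ → Type*} (f : ∀ j, Fin (τ.t j) → γ j)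
    (hf : f i ⟨x, Nat.lt_of_succ_lt hx1⟩ = f i ⟨x + 1, hx1⟩) (j : ℕ) (z : Fin (τ.t j)) :
    f j (L τ i x hx1 u j (W τ i x hx1 u j z)) = f j z := by
  by_cases h : j < i
  · rw [L_W τ i x hx1 u h]
  · rw [W_ge τ i x hx1 u h, L_ge τ i x hx1 u h]
    exact apply_lc τ i x hx1 f hf j z

variable (hsib : τ.map i ⟨x, Nat.lt_of_succ_lt hx1⟩ = τ.map i ⟨x + 1, hx1⟩)
variable (happ : u.app i ⟨x, Nat.lt_of_succ_lt hx1⟩ = u.app i ⟨x + 1, hx1⟩)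
variable (hin : i < n)

include hsib happ hin

lemma map_LW (j : ℕ) (z : Fin (τ.t j)) :
    τ.map j (L τ i x hx1 u j (W τ i x hx1 u j z)) = τ.map j z :=
  apply_LW τ i x hx1 u (fun k => τ.map k) hsib j z

lemma app_LW (j : ℕ) (z : Fin (τ.t j)) :
    u.app j (L τ i x hx1 u j (W τ i x hx1 u j z)) = u.app j z :=
  apply_LW τ i x hx1 u u.app happ j z

/-- The collapsed tree. -/
def theta : PTree n where
  t := tθ τ i
  map j z := W τ i x hx1 u (j + 1) (τ.map j (L τ i x hx1 u j z))
  mono j := by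
    intro a b hab
    by_cases h : j < i
    · have pfa : a.val < τ.t j := (tθ_bound τ i a).2 (Nat.ne_of_lt h)
      have pfb : b.val < τ.t j := (tθ_bound τ i b).2 (Nat.ne_of_lt h)
      have hab' : (⟨a.val, pfa⟩ : Fin (τ.t j)) ≤ ⟨b.val, pfb⟩ := hab
      have hmono : Monotone (K τ i x hx1 u j ∘ S τ i x hx1 u j) := Tuple.monotone_sort _
      have hm := hmono hab'
      simp only [Function.comp_apply, K] at hm
      show W τ i x hx1 u (j + 1) (τ.map j (L τ i x hx1 u j a)) ≤
        W τ i x hx1 u (j + 1) (τ.map j (L τ i x hx1 u j b))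
      rw [L_lt τ i x hx1 u h a pfa, L_lt τ i x hx1 u h b pfb]
      exact lex_fst_le hm
    · show W τ i x hx1 u (j + 1) (τ.map j (L τ i x hx1 u j a)) ≤
        W τ i x hx1 u (j + 1) (τ.map j (L τ i x hx1 u j b))
      rw [L_ge τ i x hx1 u h, W_ge τ i x hx1 u (show ¬ j + 1 < i by omega)]
      exact cmap_mono τ i x hx1 (j + 1) (τ.mono j (lmap_mono τ i x j hab))
  surjmap j := by
    intro b
    obtain ⟨a, ha⟩ := τ.surjmap j (L τ i x hx1 u (j + 1) b)
    refine ⟨W τ i x hx1 u j a, ?_⟩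
    show W τ i x hx1 u (j + 1) (τ.map j (L τ i x hx1 u j (W τ i x hx1 u j a))) = b
    rw [map_LW τ i x hx1 u hsib happ hin j a, ha, W_L τ i x hx1 u (j + 1) b]
  top j hj := by
    show tθ τ i j = 1
    rw [tθ_ne τ i (show j ≠ i by omega)]
    exact τ.top j hj

/-- The degree-one collapse morphism `τ ⟶ theta`. -/
def wHom : PTreeHom τ (theta τ i x hx1 u hsib happ hin) where
  app := W τ i x hx1 u
  surj j b := ⟨L τ i x hx1 u j b, W_L τ i x hx1 u j b⟩
  comm j z := by
    show W τ i x hx1 u (j + 1) (τ.map j z) =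
      W τ i x hx1 u (j + 1) (τ.map j (L τ i x hx1 u j (W τ i x hx1 u j z)))
    rw [map_LW τ i x hx1 u hsib happ hin j z]
  fiberMono j a b hfib hab := by
    by_cases h : j < i
    · have hK : K τ i x hx1 u j a ≤ K τ i x hx1 u j b := by
        unfold K
        exact lex_le_of (le_of_eq (congrArg (W τ i x hx1 u (j + 1)) hfib))
          (fun _ => lex_le_of (u.fiberMono j a b hfib hab) (fun _ => hab))
      have h2 := (Sinv_le_iff τ i x hx1 u).mpr hK
      rw [Fin.le_def] at h2
      show (W τ i x hx1 u j a).val ≤ (W τ i x hx1 u j b).val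
      rw [W_lt τ i x hx1 u h, W_lt τ i x hx1 u h]
      exact h2
    · rw [W_ge τ i x hx1 u h]
      exact cmap_mono τ i x hx1 j hab

/-- The residual morphism `theta ⟶ σ`. -/
def vHom : PTreeHom (theta τ i x hx1 u hsib happ hin) σ where
  app j z := u.app j (L τ i x hx1 u j z)
  surj j b := by
    obtain ⟨a, ha⟩ := u.surj j b
    refine ⟨W τ i x hx1 u j a, ?_⟩
    show u.app j (L τ i x hx1 u j (W τ i x hx1 u j a)) = b
    rw [app_LW τ i x hx1 u hsib happ hin j a]
    exact ha
  comm j z := by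
    show u.app (j + 1) (L τ i x hx1 u (j + 1)
        (W τ i x hx1 u (j + 1) (τ.map j (L τ i x hx1 u j z)))) =
      σ.map j (u.app j (L τ i x hx1 u j z))
    rw [app_LW τ i x hx1 u hsib happ hin (j + 1) (τ.map j (L τ i x hx1 u j z))]
    exact u.comm j _
  fiberMono j a b hfib hab := by
    by_cases h : j < i
    · have pfa : a.val < τ.t j := (tθ_bound τ i a).2 (Nat.ne_of_lt h)
      have pfb : b.val < τ.t j := (tθ_bound τ i b).2 (Nat.ne_of_lt h)
      have hab' : (⟨a.val, pfa⟩ : Fin (τ.t j)) ≤ ⟨b.val, pfb⟩ := hab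
      have hmono : Monotone (K τ i x hx1 u j ∘ S τ i x hx1 u j) := Tuple.monotone_sort _
      have hm := hmono hab'
      simp only [Function.comp_apply, K] at hm
      have hfib' : W τ i x hx1 u (j + 1) (τ.map j (L τ i x hx1 u j a)) =
          W τ i x hx1 u (j + 1) (τ.map j (L τ i x hx1 u j b)) := hfib
      rw [L_lt τ i x hx1 u h a pfa, L_lt τ i x hx1 u h b pfb] at hfib'
      show u.app j (L τ i x hx1 u j a) ≤ u.app j (L τ i x hx1 u j b)
      rw [L_lt τ i x hx1 u h a pfa, L_lt τ i x hx1 u h b pfb]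
      exact lex_fst_le (lex_snd_le hm hfib')
    · have h1 : ¬ j + 1 < i := by omega
      have hfib' : W τ i x hx1 u (j + 1) (τ.map j (L τ i x hx1 u j a)) =
          W τ i x hx1 u (j + 1) (τ.map j (L τ i x hx1 u j b)) := hfib
      rw [W_ge τ i x hx1 u h1, L_ge τ i x hx1 u h] at hfib'
      have hmm := cmap_inj τ i x hx1 (show j + 1 ≠ i by omega) hfib'
      show u.app j (L τ i x hx1 u j a) ≤ u.app j (L τ i x hx1 u j b)
      rw [L_ge τ i x hx1 u h]
      exact u.fiberMono j _ _ hmm (lmap_mono τ i x j hab)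

lemma theta_deg : ((theta τ i x hx1 u hsib happ hin).deg : ℤ) = (τ.deg : ℤ) - 1 := by
  show ((∑ j ∈ Finset.range n, tθ τ i j : ℕ) : ℤ) = _
  push_cast
  have hterm : ∀ j ∈ Finset.range n, ((tθ τ i j : ℕ) : ℤ) =
      (τ.t j : ℤ) - (if j = i then 1 else 0) := by
    intro j _
    by_cases h : j = i
    · subst h
      rw [if_pos rfl, tθ_i]
      omega
    · rw [if_neg h, tθ_ne τ i h]
      ring
  rw [Finset.sum_congr rfl hterm, Finset.sum_sub_distrib,
    Finset.sum_ite_eq' (Finset.range n) i (fun _ => (1 : ℤ)),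
    if_pos (Finset.mem_range.mpr hin)]
  unfold PTree.deg
  push_cast
  ring

lemma comp_eq :
    (wHom τ i x hx1 u hsib happ hin ≫ vHom τ i x hx1 u hsib happ hin : τ ⟶ σ) = u := by
  apply PTreeHom.ext'
  funext j z
  show u.app j (L τ i x hx1 u j (W τ i x hx1 u j z)) = u.app j z
  exact app_LW τ i x hx1 u hsib happ hin j z

lemma wdeg :
    homDeg (show τ ⟶ theta τ i x hx1 u hsib happ hin from
      wHom τ i x hx1 u hsib happ hin) = 1 := by
  unfold homDeg
  rw [theta_deg τ i x hx1 u hsib happ hin]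
  ring

end Merge

lemma inj_of_ge {τ σ : PTree n} (u : PTreeHom τ σ) (j : ℕ) (hj : n ≤ j) :
    Function.Injective (u.app j) := by
  intro a b _
  have h3 := τ.top j hj
  have h1 := a.isLt
  have h2 := b.isLt
  exact Fin.ext (by omega)

lemma factor_step {τ σ : PTree n} (u : τ ⟶ σ) (h : 1 ≤ homDeg u) :
    ∃ (θ : PTree n) (w : τ ⟶ θ) (v : θ ⟶ σ), w ≫ v = u ∧ homDeg w = 1 := by
  classical
  have hex : ∃ j, ¬ Function.Injective (u.app j) := by
    by_contra hall
    push_neg at hall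
    have hle : ∀ j ∈ Finset.range n, τ.t j ≤ σ.t j := by
      intro j _
      have := Fintype.card_le_of_injective _ (hall j)
      simpa using this
    have hdeg : τ.deg ≤ σ.deg := Finset.sum_le_sum hle
    unfold homDeg at h
    omega
  obtain ⟨j0, hj0⟩ := hex
  have hj0n : j0 < n := by
    by_contra hh
    exact hj0 (inj_of_ge u j0 (by omega))
  set i := Nat.findGreatest (fun j => ¬ Function.Injective (u.app j)) n with hidef
  have hPi : ¬ Function.Injective (u.app i) :=
    Nat.findGreatest_spec (P := fun j => ¬ Function.Injective (u.app j))
      (le_of_lt hj0n) hj0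
  have hinj : ∀ m, i < m → Function.Injective (u.app m) := by
    intro m hm
    by_cases hmn : m ≤ n
    · by_contra hni
      have h5 := Nat.le_findGreatest (P := fun j => ¬ Function.Injective (u.app j)) hmn hni
      rw [← hidef] at h5
      omega
    · exact inj_of_ge u m (by omega)
  obtain ⟨a0, b0, hab0, hne0⟩ := Function.not_injective_iff.mp hPi
  obtain ⟨a, b, hab, hlt⟩ : ∃ a b : Fin (τ.t i), u.app i a = u.app i b ∧ a < b := by
    rcases lt_or_gt_of_ne hne0 with hl | hl
    exacts [⟨a0, b0, hab0, hl⟩, ⟨b0, a0, hab0.symm, hl⟩]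
  have hsib0 : τ.map i a = τ.map i b := by
    apply hinj (i + 1) (Nat.lt_succ_self i)
    rw [u.comm, u.comm, hab]
  have hx1 : (a : ℕ) + 1 < τ.t i := lt_of_le_of_lt (Nat.succ_le_of_lt hlt) b.isLt
  set a1 : Fin (τ.t i) := ⟨(a : ℕ) + 1, hx1⟩ with ha1
  have haa1 : a ≤ a1 := by rw [Fin.le_def]; exact Nat.le_succ _
  have ha1b : a1 ≤ b := by rw [Fin.le_def]; exact Nat.succ_le_of_lt (Fin.lt_def.mp hlt)
  have hm1 : τ.map i a ≤ τ.map i a1 := τ.mono i haa1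
  have hm2 : τ.map i a1 ≤ τ.map i b := τ.mono i ha1b
  have hsib : τ.map i a = τ.map i a1 := by
    apply le_antisymm hm1
    rw [← hsib0] at hm2
    exact hm2
  have hmapa1 : τ.map i a1 = τ.map i b := hsib.symm.trans hsib0
  have happ : u.app i a = u.app i a1 := by
    apply le_antisymm (u.fiberMono i a a1 hsib haa1)
    have h3 := u.fiberMono i a1 b hmapa1 ha1b
    rwa [← hab] at h3
  have hin : i < n := by
    by_contra hh
    have := τ.top i (by omega)
    omega
  exact ⟨theta τ i (a : ℕ) hx1 u hsib happ hin,
    wHom τ i (a : ℕ) hx1 u hsib happ hin,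
    vHom τ i (a : ℕ) hx1 u hsib happ hin,
    comp_eq τ i (a : ℕ) hx1 u hsib happ hin,
    wdeg τ i (a : ℕ) hx1 u hsib happ hin⟩

end Stmt3

namespace Chain

variable {n : ℕ}

def snoc : ∀ {τ θ σ : PTree n}, Chain θ σ → (τ ⟶ θ) → Chain τ σ
  | _, _, _, nil, w => cons w nil
  | _, _, _, cons v c, w => cons v (snoc c w)

lemma comp_snoc : ∀ {τ θ σ : PTree n} (c : Chain θ σ) (w : τ ⟶ θ),
    (c.snoc w).comp = w ≫ c.comp
  | _, _, _, nil, w => by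
      simp [snoc, comp]
  | _, _, _, cons v c, w => by
      simp only [snoc, comp, comp_snoc c w, Category.assoc]

lemma length_snoc : ∀ {τ θ σ : PTree n} (c : Chain θ σ) (w : τ ⟶ θ),
    (c.snoc w).length = c.length + 1
  | _, _, _, nil, _ => by simp [snoc, length]
  | _, _, _, cons v c, w => by
      simp [snoc, length, length_snoc c w]

lemma allOne_snoc : ∀ {τ θ σ : PTree n} (c : Chain θ σ) (w : τ ⟶ θ),
    c.AllOne → homDeg w = 1 → (c.snoc w).AllOne
  | _, _, _, nil, w, _, hw => by
      simp only [snoc, AllOne]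
      exact ⟨hw, trivial⟩
  | _, _, _, cons v c, w, hac, hw => by
      simp only [AllOne] at hac
      simp only [snoc, AllOne]
      exact ⟨hac.1, allOne_snoc c w hac.2 hw⟩

lemma length_eq_of_allOne : ∀ {τ σ : PTree n} (c : Chain τ σ), c.AllOne →
    (c.length : ℤ) = (τ.deg : ℤ) - (σ.deg : ℤ)
  | _, _, nil, _ => by simp [length]
  | _, _, cons v c, hac => by
      simp only [AllOne] at hac
      have ih := length_eq_of_allOne c hac.2
      have hv := hac.1
      unfold homDeg at hv
      simp only [length]
      push_cast
      linarith

end Chain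

namespace Stmt3

lemma exists_chain {n : ℕ} : ∀ (d : ℕ) {τ σ : PTree n} (u : τ ⟶ σ),
    homDeg u = (d : ℤ) + 1 →
    ∃ c : Chain τ σ, c.AllOne ∧ c.comp = u ∧ (c.length : ℤ) = homDeg u := by
  intro d
  induction d using Nat.strong_induction_on with
  | _ d ih =>
    intro τ σ u hd
    rcases Nat.eq_zero_or_pos d with rfl | hdpos
    · refine ⟨Chain.cons u Chain.nil, ?_, ?_, ?_⟩
      · simp only [Chain.AllOne]
        exact ⟨by rw [hd]; norm_num, trivial⟩
      · simp only [Chain.comp]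
        simp
      · simp only [Chain.length]
        rw [hd]
        norm_num
    · obtain ⟨d', rfl⟩ : ∃ d', d = d' + 1 := ⟨d - 1, by omega⟩
      obtain ⟨θ, w, v, hwv, hw1⟩ := factor_step u (by rw [hd]; push_cast; omega)
      have hsum : homDeg u = homDeg w + homDeg v := by unfold homDeg; ring
      have hv : homDeg v = (d' : ℤ) + 1 := by
        push_cast at hd
        linarith
      obtain ⟨c, hc1, hc2, hc3⟩ := ih d' (by omega) v hv
      refine ⟨c.snoc w, Chain.allOne_snoc c w hc1 hw1, ?_, ?_⟩
      · rw [Chain.comp_snoc, hc2, hwv]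
      · rw [Chain.length_snoc]
        push_cast
        push_cast at hc3
        linarith

end Stmt3

/-- Every morphism of `Ω_n^epi` of degree `d ≥ 1` factors as a
composite of `d` morphisms of degree 1, and every factorization into degree-1
morphisms has exactly `deg u` factors. -/
theorem stmt_3 (n : ℕ) (hn : 1 ≤ n) (τ σ : PTree n) (u : τ ⟶ σ) :
    ((1 ≤ homDeg u) →
      ∃ c : Chain τ σ, c.AllOne ∧ c.comp = u ∧ (c.length : ℤ) = homDeg u) ∧
    (∀ c : Chain τ σ, c.AllOne → c.comp = u → (c.length : ℤ) = homDeg u) := by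
  constructor
  · intro h
    obtain ⟨d, hd⟩ : ∃ d : ℕ, homDeg u = (d : ℤ) + 1 := ⟨(homDeg u - 1).toNat, by omega⟩
    exact Stmt3.exists_chain d u hd
  · intro c hc _
    exact Chain.length_eq_of_allOne c hc
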